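/- If y and z are two infinite binary words with y beginning with 0 and z beginning with 1, γ is the morphism γ(0) = w₀, γ(1) = w₁ with w₀, w₁ nonempty, and γ(y) = γ(z) as infinite words, then w₀ and w₁ commute: w₀w₁ = w₁w₀. -/

import Mathlib

/-- `l` is a prefix of the infinite word `w`. -/
def IsPrefixOfInf {α : Type*} (l : List α) (w : ℕ → α) : Prop :=
  ∀ (i : ℕ) (h : i < l.length), l[i] = w i

/-- `b` is the image of the infinite word `a` under the morphism `γ`
(extended to infinite words by concatenation). -/
def IsInfImage {α β : Type*} (γ : α → List β) (a : ℕ → α) (b : ℕ → β) : Prop :=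
  ∀ n : ℕ, IsPrefixOfInf (((List.range n).map a).flatMap γ) b

/-- `w = y · z^ω`. -/
def UltPeriodicWith {α : Type*} (w : ℕ → α) (y z : List α) : Prop :=
  z ≠ [] ∧ ∀ m : ℕ, IsPrefixOfInf (y ++ (List.replicate m z).flatten) w

def UltimatelyPeriodic {α : Type*} (w : ℕ → α) : Prop :=
  ∃ y z : List α, UltPeriodicWith w y z

/-- `x` is a (finite, contiguous) factor of the infinite word `w`. -/
def InfFactorOf {α : Type*} (x : List α) (w : ℕ → α) : Prop :=
  ∃ i : ℕ, x = List.ofFn fun j : Fin x.length => w (i + j)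

/-- adherence of a language -/
def Adherence {α : Type*} (L : Set (List α)) : Set (ℕ → α) :=
  {x | ∀ n : ℕ, ∃ w ∈ L, (List.ofFn fun i : Fin n => x i) <+: w}

section Aux
variable {β : Type*}

/-- `b` starts with `fu` followed by arbitrarily many blocks, each `u` or `v`. -/
def Fact6 (u v fu : List β) (b : ℕ → β) : Prop :=
  ∀ n : ℕ, ∃ l : List (List β), n ≤ l.length ∧ (∀ x ∈ l, x = u ∨ x = v) ∧
    IsPrefixOfInf (fu ++ l.flatten) b

lemma prefInf_mono {p q : List β} {b : ℕ → β} (hq : q <+: p) (h : IsPrefixOfInf p b) :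
    IsPrefixOfInf q b := by
  obtain ⟨r, rfl⟩ := hq
  intro i hi
  have h2 := h i (by simp; omega)
  rwa [List.getElem_append_left hi] at h2

lemma prefInf_comp {p q : List β} {b : ℕ → β} (hp : IsPrefixOfInf p b)
    (hq : IsPrefixOfInf q b) (h : p.length ≤ q.length) : p <+: q := by
  have he : p = q.take p.length := by
    apply List.ext_getElem (by simp [h])
    intro i h1 h2
    rw [List.getElem_take, hp i h1, hq i (lt_of_lt_of_le h1 h)]
  rw [he]
  exact List.take_prefix _ _

lemma prefInf_shift {p q : List β} {b : ℕ → β} (h : IsPrefixOfInf (p ++ q) b) :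
    IsPrefixOfInf q (fun i => b (p.length + i)) := by
  intro i hi
  have h2 := h (p.length + i) (by simp; omega)
  rw [List.getElem_append_right (by omega)] at h2
  simpa using h2

open Classical in
noncomputable def expnd (u t : List β) : List (List β) → List (List β)
  | [] => []
  | x :: l => if x = u then u :: expnd u t l else u :: t :: expnd u t l

lemma expnd_mem (u t : List β) (l : List (List β)) :
    ∀ x ∈ expnd u t l, x = u ∨ x = t := by
  induction l with
  | nil => simp [expnd]
  | cons a l ih =>
    intro x hx
    simp only [expnd] at hx
    split at hx <;> simp only [List.mem_cons] at hx
    · rcases hx with h | h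
      · exact Or.inl h
      · exact ih x h
    · rcases hx with h | h | h
      · exact Or.inl h
      · exact Or.inr h
      · exact ih x h

lemma expnd_len (u t : List β) (l : List (List β)) : l.length ≤ (expnd u t l).length := by
  induction l with
  | nil => simp [expnd]
  | cons a l ih => simp only [expnd]; split <;> simp <;> omega

lemma expnd_flatten (u t : List β) (l : List (List β))
    (h : ∀ x ∈ l, x = u ∨ x = u ++ t) : (expnd u t l).flatten = l.flatten := by
  induction l with
  | nil => simp [expnd]
  | cons a l ih =>
    have ih' := ih (fun x hx => h x (List.mem_cons_of_mem _ hx))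
    simp only [expnd]
    split
    · next heq => simp [heq, ih']
    · next hne =>
      rcases h a List.mem_cons_self with ha | ha
      · exact absurd ha hne
      · simp [ha, ih']

lemma expnd_head (u t : List β) (l : List (List β)) (hl : l ≠ []) :
    ∃ l', expnd u t l = u :: l' ∧ (∀ x ∈ l', x = u ∨ x = t) ∧ l.length - 1 ≤ l'.length := by
  obtain ⟨a, l2, rfl⟩ := List.exists_cons_of_ne_nil hl
  by_cases ha : a = u
  · refine ⟨expnd u t l2, by simp [expnd, ha], expnd_mem u t l2, ?_⟩
    have := expnd_len u t l2
    simp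
    omega
  · refine ⟨t :: expnd u t l2, by simp [expnd, ha], ?_, ?_⟩
    · intro x hx
      rcases List.mem_cons.mp hx with h | h
      · exact Or.inr h
      · exact expnd_mem u t l2 x h
    · have := expnd_len u t l2
      simp
      omega

lemma step6 (u v : List β) (hu : u ≠ []) (hv : v ≠ []) (b : ℕ → β)
    (Hy : Fact6 u v u b) (Hz : Fact6 u v v b) (hle : u.length ≤ v.length)
    (IH : ∀ u' v' (b' : ℕ → β), u' ≠ [] → v' ≠ [] →
      u'.length + v'.length < u.length + v.length →
      Fact6 u' v' u' b' → Fact6 u' v' v' b' → u' ++ v' = v' ++ u') :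
    u ++ v = v ++ u := by
  obtain ⟨l0, -, -, hp0⟩ := Hy 0
  have hub : IsPrefixOfInf u b := prefInf_mono (List.prefix_append _ _) hp0
  obtain ⟨l1, -, -, hp1⟩ := Hz 0
  have hvb : IsPrefixOfInf v b := prefInf_mono (List.prefix_append _ _) hp1
  obtain ⟨t, rfl⟩ := prefInf_comp hub hvb hle
  by_cases ht : t = []
  · simp [ht]
  · set b' : ℕ → β := fun i => b (u.length + i) with hb'
    have Hy' : Fact6 u t u b' := by
      intro n
      obtain ⟨l, hlen, hmem, hp⟩ := Hy (n + 1)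
      have hlne : l ≠ [] := by rintro rfl; simp at hlen
      obtain ⟨l', hexp, hmem', hlen'⟩ := expnd_head u t l hlne
      refine ⟨l', by omega, hmem', ?_⟩
      have hfl : (expnd u t l).flatten = l.flatten := expnd_flatten u t l hmem
      have hsh := prefInf_shift hp
      rw [← hfl, hexp] at hsh
      simpa using hsh
    have Hz' : Fact6 u t t b' := by
      intro n
      obtain ⟨l, hlen, hmem, hp⟩ := Hz n
      refine ⟨expnd u t l, le_trans hlen (expnd_len u t l), expnd_mem u t l, ?_⟩
      rw [expnd_flatten u t l hmem]
      have hp2 : IsPrefixOfInf (u ++ (t ++ l.flatten)) b := by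
        rw [← List.append_assoc]; exact hp
      exact prefInf_shift hp2
    have hcomm : u ++ t = t ++ u :=
      IH u t b' hu ht (by have := List.length_pos_iff.mpr hu; simp; omega) Hy' Hz'
    calc u ++ (u ++ t) = u ++ (t ++ u) := by rw [hcomm]
      _ = (u ++ t) ++ u := by simp

lemma key6 : ∀ (n : ℕ) (u v : List β), u ≠ [] → v ≠ [] → u.length + v.length ≤ n →
    ∀ b : ℕ → β, Fact6 u v u b → Fact6 u v v b → u ++ v = v ++ u := by
  intro n
  induction n using Nat.strong_induction_on with
  | _ n IH =>
    intro u v hu hv hn b Hy Hz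
    have IH' : ∀ u' v' (b' : ℕ → β), u' ≠ [] → v' ≠ [] →
        u'.length + v'.length < u.length + v.length →
        Fact6 u' v' u' b' → Fact6 u' v' v' b' → u' ++ v' = v' ++ u' := by
      intro u' v' b' h1 h2 h3 h4 h5
      exact IH (u'.length + v'.length) (by omega) u' v' h1 h2 le_rfl b' h4 h5
    rcases le_total u.length v.length with h | h
    · exact step6 u v hu hv b Hy Hz h IH'
    · have sw : ∀ fu, Fact6 u v fu b → Fact6 v u fu b := by
        intro fu H m
        obtain ⟨l, a1, a2, a3⟩ := H m
        exact ⟨l, a1, fun x hx => (a2 x hx).symm, a3⟩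
      exact (step6 v u hv hu b (sw _ Hz) (sw _ Hy) h
        (fun u' v' b' h1 h2 h3 => IH' u' v' b' h1 h2 (by omega))).symm

lemma toFact6 (γ : Fin 2 → List β) (a : ℕ → Fin 2) (b : ℕ → β) (h : IsInfImage γ a b) :
    Fact6 (γ 0) (γ 1) (γ (a 0)) b := by
  intro n
  refine ⟨(List.range n).map (fun i => γ (a (i + 1))), by simp, ?_, ?_⟩
  · intro x hx
    simp only [List.mem_map, List.mem_range] at hx
    obtain ⟨i, -, rfl⟩ := hx
    have h2 : a (i + 1) = 0 ∨ a (i + 1) = 1 := by omega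
    rcases h2 with h2 | h2 <;> simp [h2]
  · have h3 := h (n + 1)
    rw [List.range_succ_eq_map] at h3
    simpa [List.flatMap_def, List.map_map, Function.comp_def, Nat.succ_eq_add_one] using h3

end Aux

theorem stmt6 {β : Type*} (w0 w1 : List β) (h0 : w0 ≠ []) (h1 : w1 ≠ [])
    (y z : ℕ → Fin 2) (hy0 : y 0 = 0) (hz0 : z 0 = 1) (b : ℕ → β)
    (hyb : IsInfImage (![w0, w1]) y b) (hzb : IsInfImage (![w0, w1]) z b) :
    w0 ++ w1 = w1 ++ w0 := by
  have Fy := toFact6 ![w0, w1] y b hyb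
  have Fz := toFact6 ![w0, w1] z b hzb
  rw [hy0] at Fy
  rw [hz0] at Fz
  simp only [Matrix.cons_val_zero, Matrix.cons_val_one, Matrix.head_cons] at Fy Fz
  exact key6 (w0.length + w1.length) w0 w1 h0 h1 le_rfl b Fy Fz
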